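/- Let G be a finite abelian group of order h' and let S ⊆ G satisfy h'/2 < |S| < h'; write δ = |S|/h'. Then #{x ∈ G : |S ∪ (S + x)| < (1 − (1−δ)^{3/2})·h'} < (1−δ)^{1/2}·h'. -/

import Mathlib

open Finset

lemma mem_shift {G : Type} [AddCommGroup G] [Fintype G] [DecidableEq G]
    (S : Finset G) (x a : G) : a ∈ S.image (· + x) ↔ a - x ∈ S := by
  simp only [mem_image]
  constructor
  · rintro ⟨b, hb, rfl⟩; simpa using hb
  · intro h; exact ⟨a - x, h, by simp⟩

lemma compl_shift {G : Type} [AddCommGroup G] [Fintype G] [DecidableEq G]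
    (S : Finset G) (x : G) : (Sᶜ).image (· + x) = (S.image (· + x))ᶜ := by
  ext a
  simp [mem_shift, mem_compl]

lemma sum_inter_card {G : Type} [AddCommGroup G] [Fintype G] [DecidableEq G]
    (T : Finset G) : ∑ x : G, (T ∩ T.image (· + x)).card = T.card ^ 2 := by
  have h1 : ∀ x : G, T ∩ T.image (· + x) = T.filter (fun y => y - x ∈ T) := by
    intro x; ext y; simp [mem_shift, mem_filter, mem_inter, sub_eq_add_neg]
  simp only [h1, card_filter]
  rw [Finset.sum_comm]
  have h2 : ∀ y : G, ∑ x : G, (if y - x ∈ T then 1 else 0) = T.card := by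
    intro y
    rw [← card_filter]
    have : (univ.filter fun x => y - x ∈ T) = T.image (fun t => y - t) := by
      ext x
      simp only [mem_filter, mem_univ, true_and, mem_image]
      constructor
      · intro h; exact ⟨y - x, h, by simp⟩
      · rintro ⟨t, ht, rfl⟩; simpa using ht
    rw [this, card_image_of_injective _ (sub_right_injective)]
  calc ∑ y ∈ T, ∑ x : G, (if y - x ∈ T then 1 else 0)
      = ∑ _y ∈ T, T.card := by exact Finset.sum_congr rfl (fun y _ => h2 y)
    _ = T.card ^ 2 := by rw [sum_const, smul_eq_mul, sq]

theorem stmt5 (G : Type) [AddCommGroup G] [Fintype G] [DecidableEq G]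
    (S : Finset G) (h1 : (Fintype.card G : ℝ) / 2 < (S.card : ℝ))
    (h2 : S.card < Fintype.card G) :
    (({x : G | ((S ∪ S.image (· + x)).card : ℝ)
        < (1 - (1 - (S.card : ℝ) / (Fintype.card G : ℝ)) ^ ((3 : ℝ) / 2)) * Fintype.card G} :
          Set G).ncard : ℝ)
      < (1 - (S.card : ℝ) / (Fintype.card G : ℝ)) ^ ((1 : ℝ) / 2) * Fintype.card G := by
  classical
  have hn0 : (0 : ℝ) < (Fintype.card G : ℝ) := by
    have : 0 < Fintype.card G := lt_of_le_of_lt (Nat.zero_le _) h2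
    exact_mod_cast this
  set n : ℝ := (Fintype.card G : ℝ) with hn
  set a : ℝ := 1 - (S.card : ℝ) / n with ha
  have hsn : (S.card : ℝ) < n := by rw [hn]; exact_mod_cast h2
  have ha0 : 0 < a := by
    rw [ha, sub_pos]
    exact (div_lt_one hn0).mpr hsn
  set T : Finset G := Sᶜ with hT
  have hTcard : (T.card : ℝ) = a * n := by
    rw [hT, card_compl]
    have h2' : S.card ≤ Fintype.card G := le_of_lt h2
    push_cast [h2']
    rw [ha]
    field_simp
    rw [hn]
  -- the bad set as a finset
  set B : Finset G := univ.filter (fun x =>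
    ((S ∪ S.image (· + x)).card : ℝ) < (1 - a ^ ((3:ℝ)/2)) * n) with hB
  have hset : ({x : G | ((S ∪ S.image (· + x)).card : ℝ)
      < (1 - (1 - (S.card : ℝ) / (Fintype.card G : ℝ)) ^ ((3 : ℝ) / 2)) * Fintype.card G} : Set G)
      = ↑B := by
    ext x; simp [hB, ← ha, ← hn]
  rw [hset, Set.ncard_coe_finset]
  -- key: for x ∈ B, intersection of complements large
  have hkey : ∀ x ∈ B, a ^ ((3:ℝ)/2) * n < ((T ∩ T.image (· + x)).card : ℝ) := by
    intro x hx
    rw [hB, mem_filter] at hx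
    have hcompl : T ∩ T.image (· + x) = (S ∪ S.image (· + x))ᶜ := by
      rw [hT, compl_shift, ← compl_union]
    have hle : (S ∪ S.image (· + x)).card ≤ Fintype.card G := card_le_univ _
    have hcast : ((T ∩ T.image (· + x)).card : ℝ) = n - ((S ∪ S.image (· + x)).card : ℝ) := by
      rw [hcompl, card_compl]
      push_cast [hle]
      rw [hn]
    rw [hcast]
    nlinarith [hx.2]
  have hsum : ∑ x : G, ((T ∩ T.image (· + x)).card : ℝ) = (a * n) ^ 2 := by
    rw [← hTcard]
    exact_mod_cast congrArg (Nat.cast : ℕ → ℝ) (sum_inter_card T)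
  have hnonneg : ∀ x : G, (0:ℝ) ≤ ((T ∩ T.image (· + x)).card : ℝ) := fun x => Nat.cast_nonneg _
  have hsumB : ∑ x ∈ B, ((T ∩ T.image (· + x)).card : ℝ) ≤ (a * n) ^ 2 := by
    rw [← hsum]
    exact Finset.sum_le_sum_of_subset_of_nonneg (subset_univ B) (fun x _ _ => hnonneg x)
  have hpow : a ^ ((1:ℝ)/2) * a ^ ((3:ℝ)/2) = a ^ 2 := by
    rw [← Real.rpow_add ha0, ← Real.rpow_natCast a 2]
    norm_num
  have hc0 : 0 < a ^ ((3:ℝ)/2) * n := by positivity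
  rcases B.eq_empty_or_nonempty with hBe | hBne
  · rw [hBe]
    simp only [card_empty, Nat.cast_zero]
    positivity
  · have hlt : (B.card : ℝ) * (a ^ ((3:ℝ)/2) * n) < (a * n) ^ 2 := by
      calc (B.card : ℝ) * (a ^ ((3:ℝ)/2) * n)
          = ∑ _x ∈ B, (a ^ ((3:ℝ)/2) * n) := by rw [sum_const, nsmul_eq_mul]
        _ < ∑ x ∈ B, ((T ∩ T.image (· + x)).card : ℝ) :=
            Finset.sum_lt_sum_of_nonempty hBne hkey
        _ ≤ (a * n) ^ 2 := hsumB
    have heq : (a * n) ^ 2 = (a ^ ((1:ℝ)/2) * n) * (a ^ ((3:ℝ)/2) * n) := by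
      rw [mul_pow]
      nlinarith [hpow]
    rw [heq] at hlt
    exact lt_of_mul_lt_mul_right hlt (le_of_lt hc0)
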